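/- arXiv:2405.00807 — 2 statements merged into one kernel-verified Lean document; each statement's English description precedes it below -/
import Mathlib

section
/- Freedman-style corollary (Proposition 'nice trick'): Let Z_1, ..., Z_s be random variables adapted to a filtration with |Z_j| ≤ A almost surely, conditional variance V_j := Var[Z_j | Z_1,...,Z_{j-1}] ≤ B·E[Z_j | Z_1,...,Z_{j-1}] + C almost surely, where 4A ≤ B ≤ 1 and C > 0. Then for fixed ρ_1 < ρ_2 and any q ∈ (-ρ_1, 2ρ_2 - ρ_1 - 2sC/B], we have P[∑_j Z_j < -q and ∑_j E[Z_j | Z_1,...,Z_{j-1}] ∈ [ρ_1, ρ_2]] ≤ exp(-(ρ_1 + q)²/(4Bρ_2)). -/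
open MeasureTheory Filter

section Helpers

variable {Ω : Type*} {m0 : MeasurableSpace Ω} {μ : Measure Ω}

lemma my_factorial_ge (n : ℕ) : (2:ℝ) * 3 ^ n ≤ (Nat.factorial (n+2) : ℝ) := by
  induction n with
  | zero => norm_num [Nat.factorial]
  | succ k ih =>
    have hfact : (Nat.factorial (k+3) : ℝ) = ((k:ℝ)+3) * Nat.factorial (k+2) := by
      rw [show k+3 = (k+2)+1 from rfl, Nat.factorial_succ]; push_cast; ring
    have hpos : (0:ℝ) ≤ (Nat.factorial (k+2):ℝ) := by positivity
    have hk : (0:ℝ) ≤ (k:ℝ) := Nat.cast_nonneg k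
    have h3 : (0:ℝ) < 3 ^ k := by positivity
    have : (2:ℝ) * 3 ^ (k+1) = 3 * (2 * 3 ^ k) := by ring
    rw [show k+1+2 = k+3 from rfl, hfact, this]
    nlinarith [ih, hpos, hk, h3]

lemma my_exp_quad_bound {x u : ℝ} (hxu : |x| ≤ u) (hu3 : u < 3) :
    Real.exp x ≤ 1 + x + x^2 / (2 * (1 - u/3)) := by
  have hu : 0 ≤ u := le_trans (abs_nonneg x) hxu
  have hexp : Real.exp x = ∑' n : ℕ, x ^ n / n.factorial := by
    rw [Real.exp_eq_exp_ℝ, NormedSpace.exp_eq_tsum_div]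
  have hsum : Summable (fun n : ℕ => x ^ n / n.factorial) :=
    Real.summable_pow_div_factorial x
  have hsplit : (∑ i ∈ Finset.range 2, x ^ i / (Nat.factorial i))
      + ∑' n : ℕ, x ^ (n+2) / (Nat.factorial (n+2)) = ∑' n : ℕ, x ^ n / n.factorial :=
    Summable.sum_add_tsum_nat_add 2 hsum
  have hr : (0:ℝ) ≤ u/3 := by linarith
  have hr1 : u/3 < 1 := by linarith
  have hgeo : Summable (fun n : ℕ => x^2/2 * (u/3) ^ n) :=
    (summable_geometric_of_lt_one hr hr1).mul_left _
  have hterm : ∀ n : ℕ, x ^ (n+2) / (Nat.factorial (n+2)) ≤ x^2/2 * (u/3) ^ n := by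
    intro n
    have h1 : x ^ (n+2) ≤ x^2 * u ^ n := by
      calc x ^ (n+2) ≤ |x ^ (n+2)| := le_abs_self _
      _ = x^2 * |x| ^ n := by rw [abs_pow]; rw [show n+2 = 2+n from by ring, pow_add, sq_abs]
      _ ≤ x^2 * u ^ n := by
          apply mul_le_mul_of_nonneg_left (pow_le_pow_left₀ (abs_nonneg x) hxu n) (sq_nonneg x)
    have h2 := my_factorial_ge n
    have h4 : (0:ℝ) < (Nat.factorial (n+2) : ℝ) := by positivity
    rw [div_le_iff₀ h4]
    calc x ^ (n+2) ≤ x^2 * u ^ n := h1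
    _ = x^2/2 * (u/3)^n * (2 * 3 ^ n) := by
        field_simp
        rw [mul_assoc, ← mul_pow, div_mul_cancel₀ u (by norm_num : (3:ℝ) ≠ 0)]
    _ ≤ x^2/2 * (u/3)^n * (Nat.factorial (n+2) : ℝ) := by
        apply mul_le_mul_of_nonneg_left h2 (by positivity)
  have htail : ∑' n : ℕ, x ^ (n+2) / (Nat.factorial (n+2)) ≤ x^2/2 * (1 - u/3)⁻¹ := by
    calc ∑' n : ℕ, x ^ (n+2) / (Nat.factorial (n+2)) ≤ ∑' n : ℕ, x^2/2 * (u/3) ^ n :=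
      Summable.tsum_le_tsum hterm ((summable_nat_add_iff 2).mpr hsum) hgeo
    _ = x^2/2 * (1 - u/3)⁻¹ := by rw [tsum_mul_left, tsum_geometric_of_lt_one hr hr1]
  have hmain : Real.exp x ≤ (1 + x) + x^2/2 * (1 - u/3)⁻¹ := by
    rw [hexp, ← hsplit]
    simp [Finset.sum_range_succ]
    linarith [htail]
  calc Real.exp x ≤ (1 + x) + x^2/2 * (1 - u/3)⁻¹ := hmain
  _ = 1 + x + x^2 / (2 * (1 - u/3)) := by
      rw [div_mul_eq_div_div_swap]
      ring_nf

lemma my_exponent_le {v D l t : ℝ} (hv : 0 < v) (hD : 0 ≤ D) (hl : 0 < l) (ht : v + D*l ≤ t) :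
    -(l/(v+D*l))*l + (l/(v+D*l))^2 * (2*(1-(l/(v+D*l))*D/3))⁻¹ * v ≤ -l^2/(4*(t/2)) := by
  have hw : 0 < v + D*l := by positivity
  set w := v + D*l with hwdef
  have ht0 : 0 < t := lt_of_lt_of_le hw ht
  have h3 : 0 < 3*v + 2*D*l := by positivity
  have hkey : (2*(1-(l/w)*D/3))⁻¹ = 3*w/(2*(3*v+2*D*l)) := by
    have h1 : 1 - (l/w)*D/3 = (3*v+2*D*l)/(3*w) := by
      field_simp
      ring
    rw [h1]
    rw [show (2:ℝ) * ((3*v+2*D*l)/(3*w)) = (2*(3*v+2*D*l))/(3*w)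
      from by ring, inv_div]
  rw [hkey]
  have heq : -l^2/(2*w) - (-(l/w)*l + (l/w)^2*(3*w/(2*(3*v+2*D*l)))*v) =
      D*l^3/(w*(3*v+2*D*l)) := by
    field_simp
    ring
  have hpos : 0 ≤ D*l^3/(w*(3*v+2*D*l)) := by positivity
  have h2 : -(l/w)*l + (l/w)^2*(3*w/(2*(3*v+2*D*l)))*v ≤ -l^2/(2*w) := by linarith
  have h4 : l^2/(2*t) ≤ l^2/(2*w) :=
    div_le_div_of_nonneg_left (sq_nonneg l) (by positivity) (by linarith)
  have h5 : -l^2/(2*w) ≤ -l^2/(4*(t/2)) := by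
    have : 4*(t/2) = 2*t := by ring
    rw [this, neg_div, neg_div]
    linarith
  linarith

lemma my_integrable_of_ae_bound [IsFiniteMeasure μ] {f : Ω → ℝ} (hf : AEStronglyMeasurable f μ)
    {c : ℝ} (h : ∀ᵐ ω ∂μ, |f ω| ≤ c) : Integrable f μ :=
  ⟨hf, HasFiniteIntegral.of_bounded (C := c) (by simpa [Real.norm_eq_abs] using h)⟩

lemma my_integral_mul_condexp {m : MeasurableSpace Ω} (hm : m ≤ m0) [IsProbabilityMeasure μ]
    {X W : Ω → ℝ} (hX : StronglyMeasurable[m] X)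
    (hXW : Integrable (fun ω => X ω * W ω) μ) (hW : Integrable W μ) :
    ∫ ω, X ω * W ω ∂μ = ∫ ω, X ω * (μ[W|m]) ω ∂μ := by
  have h := condExp_mul_of_stronglyMeasurable_left hX hXW hW
  rw [← integral_condExp (f := fun ω => X ω * W ω) hm]
  refine integral_congr_ae ?_
  filter_upwards [h] with ω hω
  exact hω

end Helpers

set_option maxHeartbeats 1000000 in
theorem my_freedman_main {Ω : Type*} {m0 : MeasurableSpace Ω} (μ : Measure Ω)
    [IsProbabilityMeasure μ] (ℱ : Filtration ℕ m0)
    (s : ℕ) (Z : ℕ → Ω → ℝ) (A B C ρ₁ ρ₂ q : ℝ)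
    (hadapt : ∀ j, StronglyMeasurable[ℱ j] (Z j))
    (hbdd : ∀ j ∈ Finset.Icc 1 s, ∀ᵐ ω ∂μ, |Z j ω| ≤ A)
    (hvar : ∀ j ∈ Finset.Icc 1 s, ∀ᵐ ω ∂μ,
      (μ[fun ω' => (Z j ω' - (μ[Z j | ℱ (j-1)]) ω')^2 | ℱ (j-1)]) ω
        ≤ B * (μ[Z j | ℱ (j-1)]) ω + C)
    (hs1 : 1 ≤ s) (hA0 : 0 ≤ A) (hAB : 4*A ≤ B) (hBpos : 0 < B) (hρ₂ : 0 < ρ₂)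
    (hC : 0 < C) (hq1 : -ρ₁ < q) (hq2 : q ≤ 2*ρ₂ - ρ₁ - 2*(s:ℝ)*C/B) :
    μ {ω | (∑ j ∈ Finset.Icc 1 s, Z j ω) < -q ∧
           (∑ j ∈ Finset.Icc 1 s, (μ[Z j | ℱ (j-1)]) ω) ∈ Set.Icc ρ₁ ρ₂}
      ≤ ENNReal.ofReal (Real.exp (-(ρ₁+q)^2/(4*B*ρ₂))) := by
  classical
  -- scalars
  set ℓ : ℝ := ρ₁ + q with hℓdef
  set v : ℝ := B*ρ₂ + s*C with hvdef
  set D : ℝ := 2*A with hDdef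
  have hℓ : 0 < ℓ := by rw [hℓdef]; linarith
  have hscast : (1:ℝ) ≤ (s:ℝ) := by exact_mod_cast hs1
  have hv : 0 < v := by rw [hvdef]; nlinarith
  have hD : 0 ≤ D := by rw [hDdef]; linarith
  have hw : 0 < v + D*ℓ := by positivity
  set lam : ℝ := ℓ/(v+D*ℓ) with hlamdef
  have hlam : 0 < lam := div_pos hℓ hw
  have hu1 : lam*D < 1 := by
    rw [hlamdef, div_mul_eq_mul_div, div_lt_one hw]
    nlinarith
  have hu0 : 0 ≤ lam*D := mul_nonneg hlam.le hD
  set c : ℝ := (2*(1-lam*D/3))⁻¹ with hcdef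
  have hc : 0 < c := by rw [hcdef]; apply inv_pos.2; linarith
  set φ : ℝ := lam^2*c with hφdef
  have hφ : 0 ≤ φ := by rw [hφdef]; positivity
  -- integrability of Z
  have hZint : ∀ j ∈ Finset.Icc 1 s, Integrable (Z j) μ := fun j hj =>
    my_integrable_of_ae_bound (((hadapt j).mono (ℱ.le j)).aestronglyMeasurable) (hbdd j hj)
  -- bound on conditional expectations
  have hMbdd : ∀ j ∈ Finset.Icc 1 s, ∀ᵐ ω ∂μ, |(μ[Z j | ℱ (j-1)]) ω| ≤ A := by
    intro j hj
    have h1 : Z j ≤ᵐ[μ] fun _ => A := by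
      filter_upwards [hbdd j hj] with ω hω; exact le_trans (le_abs_self _) hω
    have h2 : (fun _ => -A) ≤ᵐ[μ] Z j := by
      filter_upwards [hbdd j hj] with ω hω; exact le_trans (neg_le_neg hω) (neg_abs_le _)
    have h3 := condExp_mono (m := ℱ (j-1)) (hZint j hj) (integrable_const A) h1
    have h4 := condExp_mono (m := ℱ (j-1)) (integrable_const (-A)) (hZint j hj) h2
    rw [condExp_const (ℱ.le (j-1)) A (μ := μ)] at h3
    rw [condExp_const (ℱ.le (j-1)) (-A) (μ := μ)] at h4
    filter_upwards [h3, h4] with ω e3 e4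
    rw [abs_le]
    exact ⟨e4, e3⟩
  -- nonnegativity of conditional variance
  have hVnn : ∀ j, 0 ≤ᵐ[μ]
      μ[fun ω' => (Z j ω' - (μ[Z j | ℱ (j-1)]) ω')^2 | ℱ (j-1)] :=
    fun j => condExp_nonneg (Eventually.of_forall fun ω => sq_nonneg _)
  -- combined a.e. statement
  have hae : ∀ᵐ ω ∂μ, ∀ j, j ∈ Finset.Icc 1 s →
      (|Z j ω| ≤ A ∧ |(μ[Z j | ℱ (j-1)]) ω| ≤ A ∧
       0 ≤ (μ[fun ω' => (Z j ω' - (μ[Z j | ℱ (j-1)]) ω')^2 | ℱ (j-1)]) ω ∧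
       (μ[fun ω' => (Z j ω' - (μ[Z j | ℱ (j-1)]) ω')^2 | ℱ (j-1)]) ω
          ≤ B * (μ[Z j | ℱ (j-1)]) ω + C) := by
    rw [ae_all_iff]
    intro j
    by_cases hj : j ∈ Finset.Icc 1 s
    · filter_upwards [hbdd j hj, hMbdd j hj, hVnn j, hvar j hj] with ω h1 h2 h3 h4
      exact fun _ => ⟨h1, h2, h3, h4⟩
    · exact Eventually.of_forall (fun ω hj' => absurd hj' hj)
  -- processes
  set Y : ℕ → Ω → ℝ := fun j ω => (μ[Z j | ℱ (j-1)]) ω - Z j ω with hYdef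
  set V : ℕ → Ω → ℝ :=
    fun j => μ[fun ω' => (Z j ω' - (μ[Z j | ℱ (j-1)]) ω')^2 | ℱ (j-1)] with hVdef
  set G : ℕ → Ω → ℝ :=
    fun k ω => Real.exp (∑ j ∈ Finset.Icc 1 k, (lam * Y j ω - φ * V j ω)) with hGdef
  -- measurability
  have hYsm : ∀ j, StronglyMeasurable[ℱ j] (Y j) := by
    intro j
    rw [hYdef]
    exact (stronglyMeasurable_condExp.mono (ℱ.mono (Nat.sub_le j 1))).sub (hadapt j)
  have hVsm : ∀ j, StronglyMeasurable[ℱ (j-1)] (V j) := by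
    intro j; rw [hVdef]; exact stronglyMeasurable_condExp
  have hHsm : ∀ k, Measurable[ℱ k]
      (fun ω => ∑ j ∈ Finset.Icc 1 k, (lam * Y j ω - φ * V j ω)) := by
    intro k
    apply Finset.measurable_sum
    intro j hj
    have hjk : j ≤ k := (Finset.mem_Icc.1 hj).2
    have h1 : Measurable[ℱ k] (Y j) := ((hYsm j).mono (ℱ.mono hjk)).measurable
    have h2 : Measurable[ℱ k] (V j) :=
      ((hVsm j).mono (ℱ.mono (le_trans (Nat.sub_le j 1) hjk))).measurable
    exact (h1.const_mul lam).sub (h2.const_mul φ)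
  have hGsm : ∀ k, StronglyMeasurable[ℱ k] (G k) := by
    intro k; rw [hGdef]
    exact (Real.measurable_exp.comp (hHsm k)).stronglyMeasurable
  -- a.e. bound on G
  have hGbdd : ∀ k, k ≤ s → ∀ᵐ ω ∂μ, |G k ω| ≤ Real.exp (k*(lam*D)) := by
    intro k hk
    filter_upwards [hae] with ω hω
    rw [hGdef]
    simp only
    rw [abs_of_pos (Real.exp_pos _), Real.exp_le_exp]
    calc ∑ j ∈ Finset.Icc 1 k, (lam * Y j ω - φ * V j ω)
        ≤ ∑ _j ∈ Finset.Icc 1 k, lam*D := by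
          apply Finset.sum_le_sum
          intro j hj
          have hjs : j ∈ Finset.Icc 1 s := by
            rw [Finset.mem_Icc] at hj ⊢; exact ⟨hj.1, le_trans hj.2 hk⟩
          obtain ⟨h1, h2, h3, _h4⟩ := hω j hjs
          have hYb : |Y j ω| ≤ D := by
            rw [hYdef]; simp only
            rw [hDdef]
            calc |(μ[Z j | ℱ (j-1)]) ω - Z j ω|
                ≤ |(μ[Z j | ℱ (j-1)]) ω| + |Z j ω| := abs_sub _ _
            _ ≤ 2*A := by linarith
          have h5 : lam * Y j ω ≤ lam * D :=
            mul_le_mul_of_nonneg_left (le_trans (le_abs_self _) hYb) hlam.le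
          have h6 : 0 ≤ φ * V j ω := mul_nonneg hφ h3
          linarith
    _ = k*(lam*D) := by
        rw [Finset.sum_const, Nat.card_Icc, nsmul_eq_mul]
        norm_num
  have hGint : ∀ k, k ≤ s → Integrable (G k) μ := fun k hk =>
    my_integrable_of_ae_bound ((hGsm k).mono (ℱ.le k)).aestronglyMeasurable (hGbdd k hk)
  -- a.e. bound for the Y increments
  have haeY : ∀ᵐ ω ∂μ, ∀ j, j ∈ Finset.Icc 1 s → |Y j ω| ≤ D := by
    filter_upwards [hae] with ω hω j hj
    obtain ⟨h1, h2, _, _⟩ := hω j hj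
    rw [hYdef]; simp only
    rw [hDdef]
    calc |(μ[Z j | ℱ (j-1)]) ω - Z j ω|
        ≤ |(μ[Z j | ℱ (j-1)]) ω| + |Z j ω| := abs_sub _ _
    _ ≤ 2*A := by linarith
  -- a.e. facts about V
  have haeV : ∀ᵐ ω ∂μ, ∀ j, j ∈ Finset.Icc 1 s →
      (0 ≤ V j ω ∧ V j ω ≤ B*A + C) := by
    filter_upwards [hae] with ω hω j hj
    obtain ⟨h1, h2, h3, h4⟩ := hω j hj
    refine ⟨h3, ?_⟩
    have h5 : B * (μ[Z j | ℱ (j-1)]) ω ≤ B * A :=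
      mul_le_mul_of_nonneg_left (le_trans (le_abs_self _) h2) hBpos.le
    have h6 : V j ω ≤ B * (μ[Z j | ℱ (j-1)]) ω + C := h4
    linarith
  have hcX : ∀ k : ℕ, (0:ℝ) ≤ Real.exp (k*(lam*D)) := fun k => (Real.exp_pos _).le
  -- the key supermartingale-type estimate
  have hmain : ∀ k, k ≤ s → ∫ ω, G k ω ∂μ ≤ 1 := by
    intro k
    induction k with
    | zero =>
      intro _
      rw [hGdef]
      simp only [show Finset.Icc 1 0 = ∅ from Finset.Icc_eq_empty (by norm_num),
        Finset.sum_empty, Real.exp_zero]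
      simp
    | succ k ih =>
      intro hk1
      have hk : k ≤ s := le_trans (Nat.le_succ k) hk1
      have ihk := ih hk
      have hks : k+1 ∈ Finset.Icc 1 s :=
        Finset.mem_Icc.2 ⟨Nat.succ_le_succ (Nat.zero_le k), hk1⟩
      set X : Ω → ℝ := fun ω =>
        Real.exp ((∑ j ∈ Finset.Icc 1 k, (lam * Y j ω - φ * V j ω)) - φ * V (k+1) ω) with hXdef
      set W : Ω → ℝ := fun ω => Real.exp (lam * Y (k+1) ω) with hWdef
      set W' : Ω → ℝ := fun ω =>
        1 + lam * Y (k+1) ω + (c*lam^2) * (Y (k+1) ω)^2 with hW'def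
      have hVk : StronglyMeasurable[ℱ k] (V (k+1)) := (hVsm (k+1)).mono (ℱ.mono (by omega))
      have hXsm : StronglyMeasurable[ℱ k] X := by
        rw [hXdef]
        exact (Real.measurable_exp.comp
          ((hHsm k).sub (hVk.measurable.const_mul φ))).stronglyMeasurable
      have hXaesm : AEStronglyMeasurable X μ := (hXsm.mono (ℱ.le k)).aestronglyMeasurable
      have hYaesm : AEStronglyMeasurable (Y (k+1)) μ :=
        ((hYsm (k+1)).mono (ℱ.le _)).aestronglyMeasurable
      have hY2aesm : AEStronglyMeasurable (fun ω => (Y (k+1) ω)^2) μ :=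
        ((((hYsm (k+1)).mono (ℱ.le _)).measurable.pow_const 2)).stronglyMeasurable.aestronglyMeasurable
      have hVaesm : AEStronglyMeasurable (V (k+1)) μ :=
        ((hVsm (k+1)).mono (ℱ.le _)).aestronglyMeasurable
      have hWaesm : AEStronglyMeasurable W μ := by
        rw [hWdef]
        exact (Real.measurable_exp.comp
          ((((hYsm (k+1)).mono (ℱ.le _)).measurable).const_mul lam)).stronglyMeasurable.aestronglyMeasurable
      have hX0 : ∀ ω, 0 ≤ X ω := fun ω => (Real.exp_pos _).le
      have hXbdd : ∀ᵐ ω ∂μ, |X ω| ≤ Real.exp (k*(lam*D)) := by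
        filter_upwards [haeV, hGbdd k hk] with ω hω hG
        have h3 : 0 ≤ V (k+1) ω := (hω (k+1) hks).1
        have hGkω : G k ω = Real.exp (∑ j ∈ Finset.Icc 1 k, (lam * Y j ω - φ * V j ω)) := by
          rw [hGdef]
        rw [hXdef]
        simp only [abs_of_pos (Real.exp_pos _)]
        calc Real.exp ((∑ j ∈ Finset.Icc 1 k, (lam * Y j ω - φ * V j ω)) - φ * V (k+1) ω)
            ≤ Real.exp (∑ j ∈ Finset.Icc 1 k, (lam * Y j ω - φ * V j ω)) := by
              rw [Real.exp_le_exp]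
              nlinarith [mul_nonneg hφ h3]
        _ = G k ω := hGkω.symm
        _ ≤ Real.exp (k*(lam*D)) := le_trans (le_abs_self _) hG
      have hXint : Integrable X μ := my_integrable_of_ae_bound hXaesm hXbdd
      have hYbd : ∀ᵐ ω ∂μ, |Y (k+1) ω| ≤ D := by
        filter_upwards [haeY] with ω hω; exact hω (k+1) hks
      have hYint : Integrable (Y (k+1)) μ := my_integrable_of_ae_bound hYaesm hYbd
      have hXYint : Integrable (fun ω => X ω * Y (k+1) ω) μ := by
        apply my_integrable_of_ae_bound (hXaesm.mul hYaesm) (c := Real.exp (k*(lam*D)) * D)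
        filter_upwards [hXbdd, hYbd] with ω h1 h2
        simp only [Pi.mul_apply, abs_mul]
        exact mul_le_mul h1 h2 (abs_nonneg _) (hcX k)
      have hY2bd : ∀ᵐ ω ∂μ, |(Y (k+1) ω)^2| ≤ D^2 := by
        filter_upwards [hYbd] with ω h1
        rw [abs_pow]
        exact pow_le_pow_left₀ (abs_nonneg _) h1 2
      have hY2int : Integrable (fun ω => (Y (k+1) ω)^2) μ :=
        my_integrable_of_ae_bound hY2aesm hY2bd
      have hXY2int : Integrable (fun ω => X ω * (Y (k+1) ω)^2) μ := by
        apply my_integrable_of_ae_bound (hXaesm.mul hY2aesm)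
          (c := Real.exp (k*(lam*D)) * D^2)
        filter_upwards [hXbdd, hY2bd] with ω h1 h2
        simp only [Pi.mul_apply, abs_mul]
        exact mul_le_mul h1 h2 (abs_nonneg _) (hcX k)
      have hVbd : ∀ᵐ ω ∂μ, |V (k+1) ω| ≤ B*A + C := by
        filter_upwards [haeV] with ω hω
        obtain ⟨h1, h2⟩ := hω (k+1) hks
        rw [abs_of_nonneg h1]; exact h2
      have hXVint : Integrable (fun ω => X ω * V (k+1) ω) μ := by
        apply my_integrable_of_ae_bound (hXaesm.mul hVaesm)
          (c := Real.exp (k*(lam*D)) * (B*A + C))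
        filter_upwards [hXbdd, hVbd] with ω h1 h2
        simp only [Pi.mul_apply, abs_mul]
        exact mul_le_mul h1 h2 (abs_nonneg _) (hcX k)
      have hWbdd : ∀ᵐ ω ∂μ, |W ω| ≤ Real.exp (lam*D) := by
        filter_upwards [hYbd] with ω hω
        rw [hWdef]
        simp only [abs_of_pos (Real.exp_pos _), Real.exp_le_exp]
        calc lam * Y (k+1) ω ≤ lam * |Y (k+1) ω| :=
              mul_le_mul_of_nonneg_left (le_abs_self _) hlam.le
        _ ≤ lam * D := mul_le_mul_of_nonneg_left hω hlam.le
      have hWint : Integrable W μ := my_integrable_of_ae_bound hWaesm hWbdd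
      have hsplitXW : ∀ ω, G (k+1) ω = X ω * W ω := by
        intro ω
        rw [hGdef, hXdef, hWdef]
        simp only
        rw [← Real.exp_add]
        congr 1
        rw [Finset.sum_Icc_succ_top (Nat.succ_le_succ (Nat.zero_le k))]
        ring
      have hXWint : Integrable (fun ω => X ω * W ω) μ :=
        (hGint (k+1) hk1).congr (Eventually.of_forall hsplitXW)
      have hXW'int : Integrable (fun ω => X ω * W' ω) μ := by
        apply my_integrable_of_ae_bound (hXaesm.mul (by
          rw [hW'def]
          exact ((aestronglyMeasurable_const.add (hYaesm.const_mul lam)).add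
            (hY2aesm.const_mul (c*lam^2)))))
          (c := Real.exp (k*(lam*D)) * (1 + lam*D + (c*lam^2)*D^2))
        filter_upwards [hXbdd, hYbd, hY2bd] with ω h1 h2 h3
        simp only [Pi.mul_apply, abs_mul]
        apply mul_le_mul h1 ?_ (abs_nonneg _) (hcX k)
        rw [hW'def]
        simp only
        have e1 : lam * Y (k+1) ω ≤ lam * D :=
          mul_le_mul_of_nonneg_left (le_trans (le_abs_self _) h2) hlam.le
        have e2 : (c*lam^2) * (Y (k+1) ω)^2 ≤ (c*lam^2) * D^2 := by
          apply mul_le_mul_of_nonneg_left (le_trans (le_abs_self _) h3)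
          positivity
        have e3 : -(lam*D) ≤ lam * Y (k+1) ω := by
          have := neg_abs_le (lam * Y (k+1) ω)
          have h4 : |lam * Y (k+1) ω| ≤ lam * D := by
            rw [abs_mul, abs_of_pos hlam]
            exact mul_le_mul_of_nonneg_left h2 hlam.le
          linarith
        have e4 : 0 ≤ (c*lam^2) * (Y (k+1) ω)^2 := by positivity
        have e5 : 0 ≤ (c*lam^2) * D^2 := by positivity
        have e6 : 0 ≤ lam * D := hu0
        rw [abs_le]
        constructor <;> linarith
      -- the conditional expectation computations
      have hcondY : (μ[Y (k+1)|ℱ k]) =ᵐ[μ] 0 := by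
        have hYeq : Y (k+1) = (μ[Z (k+1)|ℱ k]) - (Z (k+1)) := by
          funext ω
          rw [hYdef]
          simp [Pi.sub_apply, Nat.add_sub_cancel]
        rw [hYeq]
        refine (condExp_sub integrable_condExp (hZint (k+1) hks) (ℱ k)).trans ?_
        rw [condExp_of_stronglyMeasurable (ℱ.le k) stronglyMeasurable_condExp integrable_condExp]
        simp
      have hcondY2 : μ[(fun ω => (Y (k+1) ω)^2)|ℱ k] = V (k+1) := by
        have e : (fun ω => (Y (k+1) ω)^2)
            = fun ω' => (Z (k+1) ω' - (μ[Z (k+1) | ℱ k]) ω')^2 := by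
          funext ω; rw [hYdef]; simp only [Nat.add_sub_cancel]; ring
        rw [e, hVdef]
        simp only [Nat.add_sub_cancel]
      have hXY : ∫ ω, X ω * Y (k+1) ω ∂μ = 0 := by
        rw [my_integral_mul_condexp (ℱ.le k) hXsm hXYint hYint]
        have : (fun ω => X ω * (μ[Y (k+1)|ℱ k]) ω) =ᵐ[μ] fun _ => (0:ℝ) := by
          filter_upwards [hcondY] with ω hω
          rw [hω]
          simp
        rw [integral_congr_ae this, integral_zero]
      have hXY2 : ∫ ω, X ω * (Y (k+1) ω)^2 ∂μ = ∫ ω, X ω * V (k+1) ω ∂μ := by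
        rw [my_integral_mul_condexp (ℱ.le k) hXsm hXY2int hY2int, hcondY2]
      -- pointwise bound W ≤ W'
      have hWW' : ∀ᵐ ω ∂μ, X ω * W ω ≤ X ω * W' ω := by
        filter_upwards [hYbd] with ω hω
        apply mul_le_mul_of_nonneg_left ?_ (hX0 ω)
        have h1 : |lam * Y (k+1) ω| ≤ lam*D := by
          rw [abs_mul, abs_of_pos hlam]
          exact mul_le_mul_of_nonneg_left hω hlam.le
        have h2 := my_exp_quad_bound h1 (lt_trans hu1 (by norm_num))
        rw [hWdef, hW'def]
        simp only
        calc Real.exp (lam * Y (k+1) ω)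
            ≤ 1 + lam * Y (k+1) ω + (lam * Y (k+1) ω)^2 / (2*(1-lam*D/3)) := h2
        _ = 1 + lam * Y (k+1) ω + (c*lam^2) * (Y (k+1) ω)^2 := by
            rw [hcdef]; ring
      -- assemble
      have step1 : ∫ ω, G (k+1) ω ∂μ = ∫ ω, X ω * W ω ∂μ :=
        integral_congr_ae (Eventually.of_forall hsplitXW)
      have step2 : ∫ ω, X ω * W ω ∂μ ≤ ∫ ω, X ω * W' ω ∂μ :=
        integral_mono_ae hXWint hXW'int hWW'
      have step3 : ∫ ω, X ω * W' ω ∂μ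
          = ∫ ω, X ω ∂μ + lam * ∫ ω, X ω * Y (k+1) ω ∂μ
            + (c*lam^2) * ∫ ω, X ω * (Y (k+1) ω)^2 ∂μ := by
        have e : ∀ ω, X ω * W' ω
            = (X ω + lam * (X ω * Y (k+1) ω)) + (c*lam^2) * (X ω * (Y (k+1) ω)^2) := by
          intro ω; rw [hW'def]; ring
        have i2 : Integrable (fun a => lam * (X a * Y (k+1) a)) μ := hXYint.const_mul lam
        have i3 : Integrable (fun a => (c*lam^2) * (X a * (Y (k+1) a)^2)) μ :=
          hXY2int.const_mul _
        have i1 : ∫ a, ((X a + lam * (X a * Y (k+1) a)) + (c*lam^2) * (X a * (Y (k+1) a)^2)) ∂μ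
            = (∫ a, (X a + lam * (X a * Y (k+1) a)) ∂μ)
              + ∫ a, (c*lam^2) * (X a * (Y (k+1) a)^2) ∂μ :=
          integral_add (hXint.add i2) i3
        have i4 : ∫ a, (X a + lam * (X a * Y (k+1) a)) ∂μ
            = (∫ a, X a ∂μ) + ∫ a, lam * (X a * Y (k+1) a) ∂μ :=
          integral_add hXint i2
        have i5 : ∫ a, lam * (X a * Y (k+1) a) ∂μ = lam * ∫ a, X a * Y (k+1) a ∂μ :=
          integral_const_mul _ _
        have i6 : ∫ a, (c*lam^2) * (X a * (Y (k+1) a)^2) ∂μ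
            = (c*lam^2) * ∫ a, X a * (Y (k+1) a)^2 ∂μ := integral_const_mul _ _
        rw [integral_congr_ae (Eventually.of_forall e), i1, i4, i5, i6]
      have step4 : ∫ ω, X ω ∂μ + lam * ∫ ω, X ω * Y (k+1) ω ∂μ
            + (c*lam^2) * ∫ ω, X ω * (Y (k+1) ω)^2 ∂μ
          = ∫ ω, X ω * (1 + φ * V (k+1) ω) ∂μ := by
        rw [hXY, hXY2]
        have e : ∀ ω, X ω * (1 + φ * V (k+1) ω)
            = (X ω + (c*lam^2) * (X ω * V (k+1) ω)) := by
          intro ω; rw [hφdef]; ring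
        have i2 : Integrable (fun a => (c*lam^2) * (X a * V (k+1) a)) μ :=
          hXVint.const_mul _
        have i1 : ∫ a, (X a + (c*lam^2) * (X a * V (k+1) a)) ∂μ
            = (∫ a, X a ∂μ) + ∫ a, (c*lam^2) * (X a * V (k+1) a) ∂μ :=
          integral_add hXint i2
        have i5 : ∫ a, (c*lam^2) * (X a * V (k+1) a) ∂μ
            = (c*lam^2) * ∫ a, X a * V (k+1) a ∂μ := integral_const_mul _ _
        rw [integral_congr_ae (Eventually.of_forall e), i1, i5]
        ring
      have hX1Vint : Integrable (fun ω => X ω * (1 + φ * V (k+1) ω)) μ := by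
        have e : ∀ ω, X ω * (1 + φ * V (k+1) ω)
            = (X ω + (c*lam^2) * (X ω * V (k+1) ω)) := by
          intro ω; rw [hφdef]; ring
        exact ((hXint.add (hXVint.const_mul _)).congr
          (Eventually.of_forall fun ω => (e ω).symm))
      have hXeVeq : ∀ ω, X ω * Real.exp (φ * V (k+1) ω) = G k ω := by
        intro ω
        rw [hGdef, hXdef]
        simp only
        rw [← Real.exp_add]
        congr 1
        ring
      have hXeVint : Integrable (fun ω => X ω * Real.exp (φ * V (k+1) ω)) μ :=
        (hGint k hk).congr (Eventually.of_forall fun ω => (hXeVeq ω).symm)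
      have step5 : ∫ ω, X ω * (1 + φ * V (k+1) ω) ∂μ
          ≤ ∫ ω, X ω * Real.exp (φ * V (k+1) ω) ∂μ := by
        apply integral_mono_ae hX1Vint hXeVint
        apply Eventually.of_forall
        intro ω
        apply mul_le_mul_of_nonneg_left ?_ (hX0 ω)
        linarith [Real.add_one_le_exp (φ * V (k+1) ω)]
      have step6 : ∫ ω, X ω * Real.exp (φ * V (k+1) ω) ∂μ = ∫ ω, G k ω ∂μ :=
        integral_congr_ae (Eventually.of_forall hXeVeq)
      calc ∫ ω, G (k+1) ω ∂μ = ∫ ω, X ω * W ω ∂μ := step1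
      _ ≤ ∫ ω, X ω * W' ω ∂μ := step2
      _ = _ := step3
      _ = ∫ ω, X ω * (1 + φ * V (k+1) ω) ∂μ := step4
      _ ≤ ∫ ω, X ω * Real.exp (φ * V (k+1) ω) ∂μ := step5
      _ = ∫ ω, G k ω ∂μ := step6
      _ ≤ 1 := ihk
  -- conclusion
  have hGs := hmain s le_rfl
  set ε : ℝ := Real.exp (lam*ℓ - φ*v) with hεdef
  have hε : 0 < ε := Real.exp_pos _
  have hsub : {ω | (∑ j ∈ Finset.Icc 1 s, Z j ω) < -q ∧
           (∑ j ∈ Finset.Icc 1 s, (μ[Z j | ℱ (j-1)]) ω) ∈ Set.Icc ρ₁ ρ₂}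
      ≤ᵐ[μ] {ω | ε ≤ G s ω} := by
    filter_upwards [hae] with ω hω
    intro hmem
    have hZsum : (∑ j ∈ Finset.Icc 1 s, Z j ω) < -q := hmem.1
    have hM1 : ρ₁ ≤ ∑ j ∈ Finset.Icc 1 s, (μ[Z j | ℱ (j-1)]) ω := hmem.2.1
    have hM2 : (∑ j ∈ Finset.Icc 1 s, (μ[Z j | ℱ (j-1)]) ω) ≤ ρ₂ := hmem.2.2
    show ε ≤ G s ω
    have hYsum : ∑ j ∈ Finset.Icc 1 s, Y j ω
        = (∑ j ∈ Finset.Icc 1 s, (μ[Z j | ℱ (j-1)]) ω)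
          - ∑ j ∈ Finset.Icc 1 s, Z j ω := by
      simp only [hYdef]
      exact Finset.sum_sub_distrib _ _
    have hY1 : ℓ ≤ ∑ j ∈ Finset.Icc 1 s, Y j ω := by
      rw [hYsum, hℓdef]; linarith
    have hV1 : ∑ j ∈ Finset.Icc 1 s, V j ω ≤ v := by
      have h1 : ∑ j ∈ Finset.Icc 1 s, V j ω
          ≤ ∑ j ∈ Finset.Icc 1 s, (B * (μ[Z j | ℱ (j-1)]) ω + C) :=
        Finset.sum_le_sum (fun j hj => (hω j hj).2.2.2)
      have h2 : ∑ j ∈ Finset.Icc 1 s, (B * (μ[Z j | ℱ (j-1)]) ω + C)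
          = B * (∑ j ∈ Finset.Icc 1 s, (μ[Z j | ℱ (j-1)]) ω) + s*C := by
        rw [Finset.sum_add_distrib, ← Finset.mul_sum, Finset.sum_const, Nat.card_Icc,
          nsmul_eq_mul]
        norm_num
      have h3 : B * (∑ j ∈ Finset.Icc 1 s, (μ[Z j | ℱ (j-1)]) ω) ≤ B * ρ₂ :=
        mul_le_mul_of_nonneg_left hM2 hBpos.le
      rw [hvdef]; linarith
    have hGsω : G s ω = Real.exp (∑ j ∈ Finset.Icc 1 s, (lam * Y j ω - φ * V j ω)) := by
      rw [hGdef]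
    rw [hGsω, hεdef, Real.exp_le_exp]
    have hsplit2 : ∑ j ∈ Finset.Icc 1 s, (lam * Y j ω - φ * V j ω)
        = lam * (∑ j ∈ Finset.Icc 1 s, Y j ω) - φ * (∑ j ∈ Finset.Icc 1 s, V j ω) := by
      rw [Finset.sum_sub_distrib, Finset.mul_sum, Finset.mul_sum]
    rw [hsplit2]
    have h4 := mul_le_mul_of_nonneg_left hY1 hlam.le
    have h5 := mul_le_mul_of_nonneg_left hV1 hφ
    linarith
  have hmono := measure_mono_ae hsub
  have hGpos : ∀ ω, 0 ≤ G s ω := fun ω => (Real.exp_pos _).le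
  have hmkv := mul_meas_ge_le_integral_of_nonneg (μ := μ) (f := G s)
    (Eventually.of_forall hGpos) (hGint s le_rfl) ε
  have h7 : (μ {x | ε ≤ G s x}).toReal ≤ 1/ε := by
    rw [le_div_iff₀ hε]
    calc (μ {x | ε ≤ G s x}).toReal * ε = ε * (μ {x | ε ≤ G s x}).toReal := by ring
    _ ≤ ∫ x, G s x ∂μ := hmkv
    _ ≤ 1 := hGs
  have h8 : μ {x | ε ≤ G s x} ≤ ENNReal.ofReal (1/ε) := by
    rw [← ENNReal.ofReal_toReal (measure_ne_top μ {x | ε ≤ G s x})]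
    exact ENNReal.ofReal_le_ofReal h7
  have h9 : 1/ε ≤ Real.exp (-ℓ^2/(4*B*ρ₂)) := by
    rw [hεdef, one_div, ← Real.exp_neg, Real.exp_le_exp]
    have h10 : v + D*ℓ ≤ 2*B*ρ₂ := by
      have hb1 : B*q ≤ B*(2*ρ₂ - ρ₁ - 2*(s:ℝ)*C/B) :=
        mul_le_mul_of_nonneg_left hq2 hBpos.le
      have hb2 : B*(2*(s:ℝ)*C/B) = 2*(s:ℝ)*C := by field_simp
      have hb3 : (4*A)*(ρ₁+q) ≤ B*(ρ₁+q) := by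
        apply mul_le_mul_of_nonneg_right hAB
        rw [hℓdef] at hℓ
        linarith
      rw [hvdef, hDdef, hℓdef]
      rw [hℓdef] at hℓ
      nlinarith [hb1, hb2, hb3]
    have h11 := my_exponent_le hv hD hℓ h10
    have h12 : (2*B*ρ₂)/2 = B*ρ₂ := by ring
    rw [h12] at h11
    calc -(lam*ℓ - φ*v) = -(lam)*ℓ + lam^2*((2*(1-lam*D/3))⁻¹)*v := by
          rw [hφdef, hcdef]; ring
    _ ≤ -ℓ^2/(4*(B*ρ₂)) := h11
    _ = -ℓ^2/(4*B*ρ₂) := by ring_nf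
  calc μ {ω | (∑ j ∈ Finset.Icc 1 s, Z j ω) < -q ∧
           (∑ j ∈ Finset.Icc 1 s, (μ[Z j | ℱ (j-1)]) ω) ∈ Set.Icc ρ₁ ρ₂}
      ≤ μ {x | ε ≤ G s x} := hmono
  _ ≤ ENNReal.ofReal (1/ε) := h8
  _ ≤ ENNReal.ofReal (Real.exp (-ℓ^2/(4*B*ρ₂))) := ENNReal.ofReal_le_ofReal h9


theorem stmt_9 {Ω : Type*} {m0 : MeasurableSpace Ω} (μ : Measure Ω)
    [IsProbabilityMeasure μ] (ℱ : Filtration ℕ m0)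
    (s : ℕ) (Z : ℕ → Ω → ℝ) (A B C ρ₁ ρ₂ q : ℝ)
    (hadapt : ∀ j, StronglyMeasurable[ℱ j] (Z j))
    (hbdd : ∀ j ∈ Finset.Icc 1 s, ∀ᵐ ω ∂μ, |Z j ω| ≤ A)
    (hvar : ∀ j ∈ Finset.Icc 1 s, ∀ᵐ ω ∂μ,
      (μ[fun ω' => (Z j ω' - (μ[Z j | ℱ (j-1)]) ω')^2 | ℱ (j-1)]) ω
        ≤ B * (μ[Z j | ℱ (j-1)]) ω + C)
    (hAB : 4*A ≤ B) (hB1 : B ≤ 1) (hC : 0 < C)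
    (hρ : ρ₁ < ρ₂) (hq1 : -ρ₁ < q) (hq2 : q ≤ 2*ρ₂ - ρ₁ - 2*(s:ℝ)*C/B) :
    μ {ω | (∑ j ∈ Finset.Icc 1 s, Z j ω) < -q ∧
           (∑ j ∈ Finset.Icc 1 s, (μ[Z j | ℱ (j-1)]) ω) ∈ Set.Icc ρ₁ ρ₂}
      ≤ ENNReal.ofReal (Real.exp (-(ρ₁+q)^2/(4*B*ρ₂))) := by
  classical
  rcases le_or_gt (B * ρ₂) 0 with hB | hBρ
  · -- degenerate: the right-hand side is at least 1
    have h1 : (0:ℝ) ≤ -(ρ₁+q)^2/(4*B*ρ₂) := by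
      apply div_nonneg_iff.mpr
      right
      constructor
      · nlinarith [sq_nonneg (ρ₁+q)]
      · nlinarith
    calc μ _ ≤ 1 := prob_le_one
    _ = ENNReal.ofReal 1 := by simp
    _ ≤ ENNReal.ofReal (Real.exp (-(ρ₁+q)^2/(4*B*ρ₂))) :=
        ENNReal.ofReal_le_ofReal (Real.one_le_exp h1)
  · rcases Nat.eq_zero_or_pos s with hs0 | hs1
    · -- s = 0 : the event is empty
      subst hs0
      have hempty : {ω : Ω | (∑ j ∈ Finset.Icc 1 0, Z j ω) < -q ∧
           (∑ j ∈ Finset.Icc 1 0, (μ[Z j | ℱ (j-1)]) ω) ∈ Set.Icc ρ₁ ρ₂} = ∅ := by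
        ext ω
        simp only [show Finset.Icc 1 0 = ∅ from Finset.Icc_eq_empty (by norm_num),
          Finset.sum_empty, Set.mem_setOf_eq, Set.mem_Icc, Set.mem_empty_iff_false,
          iff_false, not_and]
        intro h1 h2
        exfalso
        linarith
      rw [hempty]
      simp
    · -- main case
      have hA0 : 0 ≤ A := by
        have h1 : ∀ᵐ ω ∂μ, |Z 1 ω| ≤ A := hbdd 1 (Finset.mem_Icc.2 ⟨le_refl 1, hs1⟩)
        have hne : μ ≠ 0 := IsProbabilityMeasure.ne_zero μ
        haveI : (ae μ).NeBot := ae_neBot.2 hne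
        obtain ⟨ω, hω⟩ := h1.exists
        exact le_trans (abs_nonneg _) hω
      have hBpos : 0 < B := by
        rcases lt_or_eq_of_le (by linarith : (0:ℝ) ≤ B) with h | h
        · exact h
        · exfalso; rw [← h] at hBρ; simp at hBρ
      have hρ₂pos : 0 < ρ₂ := by nlinarith
      exact my_freedman_main μ ℱ s Z A B C ρ₁ ρ₂ q hadapt hbdd hvar hs1 hA0 hAB hBpos
        hρ₂pos hC hq1 hq2
end

section
/- Main concentration lemma: Let Z_1, ..., Z_s be random variables with |Z_j| ≤ A a.s. and Var[Z_j | Z_1,...,Z_{j-1}] ≤ B·E[Z_j | Z_1,...,Z_{j-1}] + C a.s., where 4A ≤ B ≤ 1, C > 0. Then for any q ≥ max(2sC/B, 16B), P[∑_j Z_j < -q] ≤ 3 e^{-q/(16B)}. -/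
open MeasureTheory

lemma exp_le_one_add_add_sq {u : ℝ} (hu : |u| ≤ 1) : Real.exp u ≤ 1 + u + u^2 := by
  have h := Real.exp_bound hu (n := 2) (by norm_num)
  have h2 : ∑ m ∈ Finset.range 2, u ^ m / m.factorial = 1 + u := by
    simp [Finset.sum_range_succ]
  rw [h2] at h
  have h3 : (|u| ^ 2 * (((2:ℕ).succ : ℝ) / (((2:ℕ).factorial : ℝ) * (2:ℕ)))) = u^2 * (3/4) := by
    rw [sq_abs]; norm_num [Nat.factorial]
  rw [h3] at h
  have := abs_le.mp h
  nlinarith [sq_nonneg u, this.2]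

lemma integral_mul_condexp_eq {Ω : Type*} {m m0 : MeasurableSpace Ω} {μ : Measure Ω}
    [IsProbabilityMeasure μ] (hm : m ≤ m0) {F G : Ω → ℝ} (hF : StronglyMeasurable[m] F)
    (hFG : Integrable (F * G) μ) (hG : Integrable G μ) :
    ∫ ω, F ω * G ω ∂μ = ∫ ω, F ω * (μ[G|m]) ω ∂μ := by
  haveI : SigmaFinite (μ.trim hm) := inferInstance
  have h1 : ∫ ω, (F * G) ω ∂μ = ∫ ω, (μ[F * G|m]) ω ∂μ := (integral_condExp hm).symm
  have h2 : μ[F * G|m] =ᵐ[μ] F * μ[G|m] := condExp_mul_of_stronglyMeasurable_left hF hFG hG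
  calc ∫ ω, F ω * G ω ∂μ = ∫ ω, (μ[F * G|m]) ω ∂μ := h1
    _ = ∫ ω, F ω * (μ[G|m]) ω ∂μ := integral_congr_ae h2

lemma integrable_of_ae_bound {Ω : Type*} {m0 : MeasurableSpace Ω} {μ : Measure Ω}
    [IsProbabilityMeasure μ] {f : Ω → ℝ} (hmeas : AEStronglyMeasurable f μ) {c : ℝ}
    (h : ∀ᵐ ω ∂μ, |f ω| ≤ c) : Integrable f μ :=
  (integrable_const c).mono' hmeas (by simpa [Real.norm_eq_abs] using h)

set_option maxHeartbeats 1000000 in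
lemma step_lemma {Ω : Type*} {m m0 : MeasurableSpace Ω} {μ : Measure Ω}
    [IsProbabilityMeasure μ] (hm : m ≤ m0) {Z W : Ω → ℝ} {A B C D : ℝ}
    (hZm : StronglyMeasurable[m0] Z)
    (hZbd : ∀ᵐ ω ∂μ, |Z ω| ≤ A)
    (hV : ∀ᵐ ω ∂μ, (μ[fun ω' => (Z ω' - (μ[Z|m]) ω')^2 | m]) ω ≤ B * (μ[Z|m]) ω + C)
    (hA : 0 < A) (hAB : 4*A ≤ B) (hC : 0 < C)
    (hW : StronglyMeasurable[m] W) (hWnn : ∀ ω, 0 ≤ W ω) (hWbd : ∀ᵐ ω ∂μ, W ω ≤ D) :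
    ∫ ω, W ω * Real.exp (-(1/(4*B)) * Z ω) ∂μ
      ≤ Real.exp ((1/(4*B))*C/B + (1/(4*B))^2*C) * ∫ ω, W ω ∂μ := by
  have hB : 0 < B := lt_of_lt_of_le (by linarith) hAB
  set l : ℝ := 1/(4*B) with hl_def
  have hl : 0 < l := by positivity
  have hlB : l * B = 1/4 := by rw [hl_def]; field_simp
  have hlA : l * A ≤ 1/16 := by
    have : l * A ≤ l * (B/4) := by nlinarith
    nlinarith
  set M : Ω → ℝ := μ[Z|m] with hM_def
  set V : Ω → ℝ := μ[fun ω' => (Z ω' - M ω')^2 | m] with hV_def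
  have hMm : StronglyMeasurable[m] M := stronglyMeasurable_condExp
  have hMm0 : StronglyMeasurable[m0] M := hMm.mono hm
  have hZint : Integrable Z μ := integrable_of_ae_bound hZm.aestronglyMeasurable hZbd
  have hMbd : ∀ᵐ ω ∂μ, |M ω| ≤ A := by
    have := ae_bdd_condExp_of_ae_bdd (R := A.toNNReal) (m := m) (f := Z) (μ := μ)
      (by simpa [Real.coe_toNNReal _ hA.le] using hZbd)
    simpa [Real.coe_toNNReal _ hA.le] using this
  have hVnn : ∀ᵐ ω ∂μ, 0 ≤ V ω :=
    condExp_nonneg (Filter.Eventually.of_forall fun ω => sq_nonneg _)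
  -- F₀
  set F₀ : Ω → ℝ := fun ω => W ω * Real.exp (-l * M ω) with hF₀_def
  have hF₀m : StronglyMeasurable[m] F₀ :=
    hW.mul (Real.continuous_exp.comp_stronglyMeasurable (hMm.const_mul (-l)))
  have hF₀m0 : StronglyMeasurable[m0] F₀ := hF₀m.mono hm
  have hF₀nn : ∀ ω, 0 ≤ F₀ ω := fun ω => mul_nonneg (hWnn ω) (Real.exp_pos _).le
  have hF₀bd : ∀ᵐ ω ∂μ, F₀ ω ≤ D * Real.exp (l * A) := by
    filter_upwards [hWbd, hMbd] with ω h1 h2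
    have : Real.exp (-l * M ω) ≤ Real.exp (l * A) := by
      apply Real.exp_le_exp.mpr; rw [abs_le] at h2; nlinarith
    calc F₀ ω ≤ D * Real.exp (-l * M ω) := by
          exact mul_le_mul_of_nonneg_right h1 (Real.exp_pos _).le
      _ ≤ D * Real.exp (l * A) := by
          have hD : 0 ≤ D := le_trans (hWnn ω) h1
          exact mul_le_mul_of_nonneg_left this hD
  have hF₀abs : ∀ᵐ ω ∂μ, |F₀ ω| ≤ D * Real.exp (l * A) := by
    filter_upwards [hF₀bd] with ω h
    rwa [abs_of_nonneg (hF₀nn ω)]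
  set D' : ℝ := D * Real.exp (l * A) with hD'_def
  have hF₀int : Integrable F₀ μ := integrable_of_ae_bound hF₀m0.aestronglyMeasurable hF₀abs
  have hWabs : ∀ᵐ ω ∂μ, |W ω| ≤ D := by
    filter_upwards [hWbd] with ω h; rwa [abs_of_nonneg (hWnn ω)]
  have hWint : Integrable W μ := integrable_of_ae_bound (hW.mono hm).aestronglyMeasurable hWabs
  -- integrability of the various products
  have hsqm : StronglyMeasurable[m0] (fun ω => (Z ω - M ω)^2) := (hZm.sub hMm0).pow 2
  have hsqbd : ∀ᵐ ω ∂μ, |(Z ω - M ω)^2| ≤ (2*A)^2 := by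
    filter_upwards [hZbd, hMbd] with ω h1 h2
    rw [abs_of_nonneg (sq_nonneg _)]
    have : |Z ω - M ω| ≤ 2*A := (abs_sub _ _).trans (by linarith)
    nlinarith [abs_nonneg (Z ω - M ω), sq_abs (Z ω - M ω)]
  have hsqint : Integrable (fun ω => (Z ω - M ω)^2) μ :=
    integrable_of_ae_bound hsqm.aestronglyMeasurable hsqbd
  have hF₀Zint : Integrable (fun ω => F₀ ω * Z ω) μ := by
    apply integrable_of_ae_bound (hF₀m0.mul hZm).aestronglyMeasurable (c := D' * A)
    filter_upwards [hF₀abs, hZbd] with ω h1 h2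
    calc |F₀ ω * Z ω| = |F₀ ω| * |Z ω| := abs_mul _ _
      _ ≤ D' * A := mul_le_mul h1 h2 (abs_nonneg _) ((abs_nonneg _).trans h1)
  have hF₀sqint : Integrable (fun ω => F₀ ω * (Z ω - M ω)^2) μ := by
    apply integrable_of_ae_bound (hF₀m0.mul hsqm).aestronglyMeasurable (c := D' * (2*A)^2)
    filter_upwards [hF₀abs, hsqbd] with ω h1 h2
    calc |F₀ ω * (Z ω - M ω)^2| = |F₀ ω| * |(Z ω - M ω)^2| := abs_mul _ _
      _ ≤ D' * (2*A)^2 := mul_le_mul h1 h2 (abs_nonneg _) ((abs_nonneg _).trans h1)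
  have hF₀Mint : Integrable (fun ω => F₀ ω * M ω) μ := by
    apply integrable_of_ae_bound (hF₀m0.mul hMm0).aestronglyMeasurable (c := D' * A)
    filter_upwards [hF₀abs, hMbd] with ω h1 h2
    calc |F₀ ω * M ω| = |F₀ ω| * |M ω| := abs_mul _ _
      _ ≤ D' * A := mul_le_mul h1 h2 (abs_nonneg _) ((abs_nonneg _).trans h1)

  -- more bounds and integrability
  have hVbd : ∀ᵐ ω ∂μ, |V ω| ≤ (2*A)^2 := by
    have := ae_bdd_condExp_of_ae_bdd (R := ((2*A)^2).toNNReal) (m := m)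
      (f := fun ω => (Z ω - M ω)^2) (μ := μ)
      (by simpa [Real.coe_toNNReal _ (by positivity : (0:ℝ) ≤ (2*A)^2)] using hsqbd)
    simpa [Real.coe_toNNReal _ (by positivity : (0:ℝ) ≤ (2*A)^2)] using this
  have hVm0 : StronglyMeasurable[m0] V := stronglyMeasurable_condExp.mono hm
  have hF₀Vint : Integrable (fun ω => F₀ ω * V ω) μ := by
    apply integrable_of_ae_bound (hF₀m0.mul hVm0).aestronglyMeasurable (c := D' * (2*A)^2)
    filter_upwards [hF₀abs, hVbd] with ω h1 h2
    calc |F₀ ω * V ω| = |F₀ ω| * |V ω| := abs_mul _ _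
      _ ≤ D' * (2*A)^2 := mul_le_mul h1 h2 (abs_nonneg _) ((abs_nonneg _).trans h1)
  have hF₀BMint : Integrable (fun ω => F₀ ω * (B*M ω + C)) μ := by
    apply integrable_of_ae_bound (hF₀m0.mul ((hMm0.const_mul B).add_const C)).aestronglyMeasurable
      (c := D' * (B*A + C))
    filter_upwards [hF₀abs, hMbd] with ω h1 h2
    have h3 : |B*M ω + C| ≤ B*A + C := by
      rw [abs_le] at h2 ⊢; constructor <;> nlinarith [h2.1, h2.2]
    calc |F₀ ω * (B*M ω + C)| = |F₀ ω| * |B*M ω + C| := abs_mul _ _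
      _ ≤ D' * (B*A + C) := mul_le_mul h1 h3 (abs_nonneg _) ((abs_nonneg _).trans h1)
  have hu : ∀ᵐ ω ∂μ, |(-l) * (Z ω - M ω)| ≤ 1 := by
    filter_upwards [hZbd, hMbd] with ω h1 h2
    have h3 : |Z ω - M ω| ≤ 2*A := (abs_sub _ _).trans (by linarith)
    rw [abs_mul, abs_neg, abs_of_pos hl]
    nlinarith
  have hEint : Integrable (fun ω => F₀ ω * Real.exp (-l * (Z ω - M ω))) μ := by
    apply integrable_of_ae_bound
      (hF₀m0.mul (Real.continuous_exp.comp_stronglyMeasurable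
        ((hZm.sub hMm0).const_mul (-l)))).aestronglyMeasurable (c := D' * Real.exp 1)
    filter_upwards [hF₀abs, hu] with ω h1 h2
    have h3 : Real.exp (-l * (Z ω - M ω)) ≤ Real.exp 1 :=
      Real.exp_le_exp.mpr (le_trans (le_abs_self _) h2)
    calc |F₀ ω * Real.exp (-l * (Z ω - M ω))|
        = |F₀ ω| * |Real.exp (-l * (Z ω - M ω))| := abs_mul _ _
      _ ≤ D' * Real.exp 1 := by
          rw [abs_of_pos (Real.exp_pos _)]
          exact mul_le_mul h1 h3 (Real.exp_pos _).le ((abs_nonneg _).trans h1)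
  have hFPint : Integrable
      (fun ω => F₀ ω * (1 + (-l * (Z ω - M ω)) + (-l * (Z ω - M ω))^2)) μ := by
    apply integrable_of_ae_bound
      (hF₀m0.mul ((stronglyMeasurable_const.add ((hZm.sub hMm0).const_mul (-l))).add
        (((hZm.sub hMm0).const_mul (-l)).pow 2))).aestronglyMeasurable (c := D' * 3)
    filter_upwards [hF₀abs, hu] with ω h1 h2
    have h3 : |1 + (-l * (Z ω - M ω)) + (-l * (Z ω - M ω))^2| ≤ 3 := by
      have := abs_le.mp h2
      rw [abs_le]; constructor <;> nlinarith [this.1, this.2, sq_nonneg (-l * (Z ω - M ω))]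
    calc |F₀ ω * (1 + (-l * (Z ω - M ω)) + (-l * (Z ω - M ω))^2)|
        = |F₀ ω| * |1 + (-l * (Z ω - M ω)) + (-l * (Z ω - M ω))^2| := abs_mul _ _
      _ ≤ D' * 3 := mul_le_mul h1 h3 (abs_nonneg _) ((abs_nonneg _).trans h1)
  have hF₀Pint : Integrable (fun ω => F₀ ω * (1 + l^2*(B*M ω + C))) μ := by
    apply integrable_of_ae_bound
      (hF₀m0.mul (stronglyMeasurable_const.add
        (((hMm0.const_mul B).add_const C).const_mul (l^2)))).aestronglyMeasurable
      (c := D' * (1 + l^2*(B*A + C)))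
    filter_upwards [hF₀abs, hMbd] with ω h1 h2
    have h2' := abs_le.mp h2
    have h3 : |1 + l^2*(B*M ω + C)| ≤ 1 + l^2*(B*A + C) := by
      have hh1 : (0:ℝ) ≤ l^2 * (B * (M ω + A)) :=
        mul_nonneg (sq_nonneg l) (mul_nonneg hB.le (by linarith [h2'.1]))
      have hh2 : (0:ℝ) ≤ l^2 * (B * (A - M ω)) :=
        mul_nonneg (sq_nonneg l) (mul_nonneg hB.le (by linarith [h2'.2]))
      have hh3 : (0:ℝ) ≤ l^2 * C := mul_nonneg (sq_nonneg l) hC.le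
      rw [abs_le]; constructor <;> nlinarith [hh1, hh2, hh3]
    calc |F₀ ω * (1 + l^2*(B*M ω + C))| = |F₀ ω| * |1 + l^2*(B*M ω + C)| := abs_mul _ _
      _ ≤ D' * (1 + l^2*(B*A + C)) := mul_le_mul h1 h3 (abs_nonneg _) ((abs_nonneg _).trans h1)
  -- pointwise identity
  have key0 : ∀ ω, W ω * Real.exp (-l * Z ω) = F₀ ω * Real.exp (-l * (Z ω - M ω)) := by
    intro ω
    show W ω * Real.exp (-l * Z ω) = (W ω * Real.exp (-l * M ω)) * Real.exp (-l * (Z ω - M ω))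
    rw [mul_assoc, ← Real.exp_add]
    congr 1
    ring
  -- exponent bound
  have hexp : ∀ ω, 0 ≤ B*M ω + C → -l * M ω + l^2*(B*M ω + C) ≤ l*C/B + l^2*C := by
    intro ω hBMC
    have hM' : -(C/B) ≤ M ω := by
      have h4 : -C ≤ M ω * B := by nlinarith
      have := (div_le_iff₀ hB).mpr h4
      rwa [neg_div] at this
    have h0 : l^2*B = l/4 := by rw [pow_two, mul_assoc, hlB]; ring
    have h0' : l^2*B - l/4 = 0 := sub_eq_zero_of_eq h0
    have h1 : (3/4)*l*(-(C/B)) ≤ (3/4)*l*(M ω) :=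
      mul_le_mul_of_nonneg_left hM' (by positivity)
    have h2 : (0:ℝ) ≤ l*C/B := by positivity
    calc -l*M ω + l^2*(B*M ω + C)
        = -(3/4)*(l*M ω) + l^2*C + (l^2*B - l/4)*(M ω) := by ring
      _ = -(3/4)*(l*M ω) + l^2*C := by rw [h0']; ring
      _ ≤ l*C/B + l^2*C := by
          have h3 : -(3/4)*(l*M ω) ≤ (3/4)*(l*(C/B)) := by linarith [h1]
          have h4 : (3/4)*(l*(C/B)) ≤ l*C/B := by
            have : l*(C/B) = l*C/B := by ring
            linarith [h2, this]
          linarith [h3, h4]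
  -- main chain
  calc ∫ ω, W ω * Real.exp (-l * Z ω) ∂μ
      = ∫ ω, F₀ ω * Real.exp (-l * (Z ω - M ω)) ∂μ :=
        integral_congr_ae (Filter.Eventually.of_forall key0)
    _ ≤ ∫ ω, F₀ ω * (1 + (-l * (Z ω - M ω)) + (-l * (Z ω - M ω))^2) ∂μ := by
        apply integral_mono_ae hEint hFPint
        filter_upwards [hu] with ω h
        exact mul_le_mul_of_nonneg_left (exp_le_one_add_add_sq h) (hF₀nn ω)
    _ = (∫ ω, F₀ ω ∂μ) + ((-l) * ∫ ω, F₀ ω * Z ω ∂μ +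
          (l * ∫ ω, F₀ ω * M ω ∂μ + l^2 * ∫ ω, F₀ ω * (Z ω - M ω)^2 ∂μ)) := by
        rw [show (fun ω => F₀ ω * (1 + (-l * (Z ω - M ω)) + (-l * (Z ω - M ω))^2))
            = (fun ω => F₀ ω + ((-l) * (F₀ ω * Z ω) +
                (l * (F₀ ω * M ω) + l^2 * (F₀ ω * (Z ω - M ω)^2))))
          from funext fun ω => by ring]
        have i1 : Integrable (fun ω => l * (F₀ ω * M ω) + l^2 * (F₀ ω * (Z ω - M ω)^2)) μ :=
          (hF₀Mint.const_mul _).add (hF₀sqint.const_mul _)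
        have i2 : Integrable (fun ω => -l * (F₀ ω * Z ω) +
            (l * (F₀ ω * M ω) + l^2 * (F₀ ω * (Z ω - M ω)^2))) μ :=
          (hF₀Zint.const_mul _).add i1
        have e1 : ∫ ω, F₀ ω + (-l * (F₀ ω * Z ω) +
              (l * (F₀ ω * M ω) + l^2 * (F₀ ω * (Z ω - M ω)^2))) ∂μ
            = (∫ ω, F₀ ω ∂μ) + ∫ ω, -l * (F₀ ω * Z ω) +
              (l * (F₀ ω * M ω) + l^2 * (F₀ ω * (Z ω - M ω)^2)) ∂μ := integral_add hF₀int i2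
        have e2 : ∫ ω, -l * (F₀ ω * Z ω) +
              (l * (F₀ ω * M ω) + l^2 * (F₀ ω * (Z ω - M ω)^2)) ∂μ
            = (∫ ω, -l * (F₀ ω * Z ω) ∂μ) + ∫ ω, l * (F₀ ω * M ω) +
              l^2 * (F₀ ω * (Z ω - M ω)^2) ∂μ := integral_add (hF₀Zint.const_mul _) i1
        have e3 : ∫ ω, l * (F₀ ω * M ω) + l^2 * (F₀ ω * (Z ω - M ω)^2) ∂μ
            = (∫ ω, l * (F₀ ω * M ω) ∂μ) + ∫ ω, l^2 * (F₀ ω * (Z ω - M ω)^2) ∂μ :=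
          integral_add (hF₀Mint.const_mul _) (hF₀sqint.const_mul _)
        have e4 : ∫ ω, -l * (F₀ ω * Z ω) ∂μ = -l * ∫ ω, F₀ ω * Z ω ∂μ := integral_const_mul _ _
        have e5 : ∫ ω, l * (F₀ ω * M ω) ∂μ = l * ∫ ω, F₀ ω * M ω ∂μ := integral_const_mul _ _
        have e6 : ∫ ω, l^2 * (F₀ ω * (Z ω - M ω)^2) ∂μ
            = l^2 * ∫ ω, F₀ ω * (Z ω - M ω)^2 ∂μ := integral_const_mul _ _
        rw [e1, e2, e3, e4, e5, e6]
    _ = (∫ ω, F₀ ω ∂μ) + l^2 * ∫ ω, F₀ ω * (Z ω - M ω)^2 ∂μ := by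
        have hIZ : ∫ ω, F₀ ω * Z ω ∂μ = ∫ ω, F₀ ω * M ω ∂μ :=
          integral_mul_condexp_eq hm hF₀m (G := Z) hF₀Zint hZint
        rw [hIZ]; ring
    _ ≤ (∫ ω, F₀ ω ∂μ) + l^2 * ∫ ω, F₀ ω * (B*M ω + C) ∂μ := by
        have hIsq : ∫ ω, F₀ ω * (Z ω - M ω)^2 ∂μ = ∫ ω, F₀ ω * V ω ∂μ :=
          integral_mul_condexp_eq hm hF₀m (G := fun ω => (Z ω - M ω)^2) hF₀sqint hsqint
        have hmono : ∫ ω, F₀ ω * V ω ∂μ ≤ ∫ ω, F₀ ω * (B*M ω + C) ∂μ := by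
          apply integral_mono_ae hF₀Vint hF₀BMint
          filter_upwards [hV] with ω h
          exact mul_le_mul_of_nonneg_left h (hF₀nn ω)
        rw [hIsq]
        nlinarith [sq_nonneg l, hmono]
    _ = ∫ ω, F₀ ω * (1 + l^2*(B*M ω + C)) ∂μ := by
        rw [show (fun ω => F₀ ω * (1 + l^2*(B*M ω + C)))
            = (fun ω => F₀ ω + l^2 * (F₀ ω * (B*M ω + C)))
          from funext fun ω => by ring]
        have e1 : ∫ ω, F₀ ω + l^2 * (F₀ ω * (B*M ω + C)) ∂μ
            = (∫ ω, F₀ ω ∂μ) + ∫ ω, l^2 * (F₀ ω * (B*M ω + C)) ∂μ :=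
          integral_add hF₀int (hF₀BMint.const_mul _)
        have e2 : ∫ ω, l^2 * (F₀ ω * (B*M ω + C)) ∂μ = l^2 * ∫ ω, F₀ ω * (B*M ω + C) ∂μ :=
          integral_const_mul _ _
        rw [e1, e2]
    _ ≤ ∫ ω, W ω * Real.exp (l*C/B + l^2*C) ∂μ := by
        apply integral_mono_ae hF₀Pint (hWint.mul_const _)
        filter_upwards [hV, hVnn] with ω h1 h2
        have hBMC : 0 ≤ B*M ω + C := le_trans h2 h1
        have e1 : Real.exp (-l*M ω) * (1 + l^2*(B*M ω + C))
            ≤ Real.exp (-l*M ω + l^2*(B*M ω + C)) := by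
          rw [Real.exp_add]
          have h3 := Real.add_one_le_exp (l^2*(B*M ω + C))
          nlinarith [Real.exp_pos (-l*M ω)]
        have e2 : Real.exp (-l*M ω + l^2*(B*M ω + C)) ≤ Real.exp (l*C/B + l^2*C) :=
          Real.exp_le_exp.mpr (hexp ω hBMC)
        calc F₀ ω * (1 + l^2*(B*M ω + C))
            = W ω * (Real.exp (-l*M ω) * (1 + l^2*(B*M ω + C))) := by
              show W ω * Real.exp (-l * M ω) * _ = _; ring
          _ ≤ W ω * Real.exp (l*C/B + l^2*C) :=
              mul_le_mul_of_nonneg_left (le_trans e1 e2) (hWnn ω)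
    _ = Real.exp (l*C/B + l^2*C) * ∫ ω, W ω ∂μ := by
        rw [integral_mul_const]
        ring

lemma iter_lemma {Ω : Type*} {m0 : MeasurableSpace Ω} {μ : Measure Ω}
    [IsProbabilityMeasure μ] (ℱ : Filtration ℕ m0)
    (s : ℕ) (Z : ℕ → Ω → ℝ) (A B C : ℝ)
    (hadapt : ∀ j, StronglyMeasurable[ℱ j] (Z j))
    (hbdd : ∀ j ∈ Finset.Icc 1 s, ∀ᵐ ω ∂μ, |Z j ω| ≤ A)
    (hvar : ∀ j ∈ Finset.Icc 1 s, ∀ᵐ ω ∂μ,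
      (μ[fun ω' => (Z j ω' - (μ[Z j | ℱ (j-1)]) ω')^2 | ℱ (j-1)]) ω
        ≤ B * (μ[Z j | ℱ (j-1)]) ω + C)
    (hA : 0 < A) (hAB : 4*A ≤ B) (hC : 0 < C) :
    ∀ n, n ≤ s → ∫ ω, Real.exp (-(1/(4*B)) * ∑ j ∈ Finset.Icc 1 n, Z j ω) ∂μ
      ≤ Real.exp ((n:ℝ) * ((1/(4*B))*C/B + (1/(4*B))^2*C)) := by
  have hB : 0 < B := lt_of_lt_of_le (by linarith) hAB
  intro n
  induction n with
  | zero =>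
    intro _
    have : Finset.Icc 1 0 = (∅ : Finset ℕ) := Finset.Icc_eq_empty (by norm_num)
    simp [this]
  | succ n ih =>
    intro hns
    have hn : n ≤ s := le_trans (Nat.le_succ n) hns
    have IH := ih hn
    have hmem : n + 1 ∈ Finset.Icc 1 s := Finset.mem_Icc.mpr ⟨by omega, hns⟩
    set W : Ω → ℝ := fun ω => Real.exp (-(1/(4*B)) * ∑ j ∈ Finset.Icc 1 n, Z j ω) with hW_def
    have hsum : StronglyMeasurable[ℱ n] (fun ω => ∑ j ∈ Finset.Icc 1 n, Z j ω) :=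
      Finset.stronglyMeasurable_fun_sum _ fun j hj =>
        (hadapt j).mono (ℱ.mono (Finset.mem_Icc.mp hj).2)
    have hW : StronglyMeasurable[ℱ n] W :=
      Real.continuous_exp.comp_stronglyMeasurable (hsum.const_mul _)
    have hWnn : ∀ ω, 0 ≤ W ω := fun ω => (Real.exp_pos _).le
    have hae : ∀ᵐ ω ∂μ, ∀ j ∈ Finset.Icc 1 n, |Z j ω| ≤ A := by
      rw [Filter.eventually_all_finset]
      intro j hj
      exact hbdd j (Finset.mem_Icc.mpr ⟨(Finset.mem_Icc.mp hj).1,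
        le_trans (Finset.mem_Icc.mp hj).2 hn⟩)
    have hWbd : ∀ᵐ ω ∂μ, W ω ≤ Real.exp ((1/(4*B)) * ((n:ℝ)*A)) := by
      filter_upwards [hae] with ω h
      apply Real.exp_le_exp.mpr
      have hS : -((n:ℝ)*A) ≤ ∑ j ∈ Finset.Icc 1 n, Z j ω := by
        have h1 : |∑ j ∈ Finset.Icc 1 n, Z j ω| ≤ ∑ j ∈ Finset.Icc 1 n, |Z j ω| :=
          Finset.abs_sum_le_sum_abs _ _
        have h2 : ∑ j ∈ Finset.Icc 1 n, |Z j ω| ≤ (Finset.Icc 1 n).card • A :=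
          Finset.sum_le_card_nsmul _ _ _ h
        rw [Nat.card_Icc] at h2
        simp only [Nat.add_sub_cancel, nsmul_eq_mul] at h2
        have := neg_abs_le (∑ j ∈ Finset.Icc 1 n, Z j ω)
        linarith
      have hl : (0:ℝ) ≤ 1/(4*B) := by positivity
      nlinarith
    have hstep := step_lemma (μ := μ) (ℱ.le n)
      ((hadapt (n+1)).mono (ℱ.le (n+1))) (hbdd (n+1) hmem) (hvar (n+1) hmem)
      hA hAB hC hW hWnn hWbd
    have hkey : ∀ ω, Real.exp (-(1/(4*B)) * ∑ j ∈ Finset.Icc 1 (n+1), Z j ω)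
        = W ω * Real.exp (-(1/(4*B)) * Z (n+1) ω) := by
      intro ω
      rw [Finset.sum_Icc_succ_top (by omega : 1 ≤ n + 1)]
      rw [hW_def, ← Real.exp_add]
      congr 1
      ring
    calc ∫ ω, Real.exp (-(1/(4*B)) * ∑ j ∈ Finset.Icc 1 (n+1), Z j ω) ∂μ
        = ∫ ω, W ω * Real.exp (-(1/(4*B)) * Z (n+1) ω) ∂μ :=
          integral_congr_ae (Filter.Eventually.of_forall hkey)
      _ ≤ Real.exp ((1/(4*B))*C/B + (1/(4*B))^2*C) * ∫ ω, W ω ∂μ := hstep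
      _ ≤ Real.exp ((1/(4*B))*C/B + (1/(4*B))^2*C)
            * Real.exp ((n:ℝ) * ((1/(4*B))*C/B + (1/(4*B))^2*C)) :=
          mul_le_mul_of_nonneg_left IH (Real.exp_pos _).le
      _ = Real.exp (((n:ℕ)+1 : ℝ) * ((1/(4*B))*C/B + (1/(4*B))^2*C)) := by
          rw [← Real.exp_add]; congr 1; ring
      _ = Real.exp (((n+1 : ℕ):ℝ) * ((1/(4*B))*C/B + (1/(4*B))^2*C)) := by push_cast; ring_nf

theorem stmt_10 {Ω : Type*} {m0 : MeasurableSpace Ω} (μ : Measure Ω)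
    [IsProbabilityMeasure μ] (ℱ : Filtration ℕ m0)
    (s : ℕ) (Z : ℕ → Ω → ℝ) (A B C q : ℝ)
    (hadapt : ∀ j, StronglyMeasurable[ℱ j] (Z j))
    (hbdd : ∀ j ∈ Finset.Icc 1 s, ∀ᵐ ω ∂μ, |Z j ω| ≤ A)
    (hvar : ∀ j ∈ Finset.Icc 1 s, ∀ᵐ ω ∂μ,
      (μ[fun ω' => (Z j ω' - (μ[Z j | ℱ (j-1)]) ω')^2 | ℱ (j-1)]) ω
        ≤ B * (μ[Z j | ℱ (j-1)]) ω + C)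
    (hA : 0 < A) (hAB : 4*A ≤ B) (hB1 : B ≤ 1) (hC : 0 < C)
    (hq : max (2*(s:ℝ)*C/B) (16*B) ≤ q) :
    μ {ω | (∑ j ∈ Finset.Icc 1 s, Z j ω) < -q}
      ≤ ENNReal.ofReal (3 * Real.exp (-q/(16*B))) := by
  have hB : 0 < B := lt_of_lt_of_le (by linarith) hAB
  have hq1 : 2*(s:ℝ)*C/B ≤ q := le_trans (le_max_left _ _) hq
  have hq2 : 16*B ≤ q := le_trans (le_max_right _ _) hq
  have hq0 : (0:ℝ) ≤ q := le_trans (by positivity) hq2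
  have hint := iter_lemma ℱ s Z A B C hadapt hbdd hvar hA hAB hC s le_rfl
  set f : Ω → ℝ := fun ω => Real.exp (-(1/(4*B)) * ∑ j ∈ Finset.Icc 1 s, Z j ω) with hf_def
  have hsum : StronglyMeasurable[m0] (fun ω => ∑ j ∈ Finset.Icc 1 s, Z j ω) :=
    Finset.stronglyMeasurable_fun_sum _ fun j _ => (hadapt j).mono (ℱ.le j)
  have hfm : StronglyMeasurable[m0] f :=
    Real.continuous_exp.comp_stronglyMeasurable (hsum.const_mul _)
  have hae : ∀ᵐ ω ∂μ, ∀ j ∈ Finset.Icc 1 s, |Z j ω| ≤ A := by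
    rw [Filter.eventually_all_finset]; exact hbdd
  have hfbd : ∀ᵐ ω ∂μ, |f ω| ≤ Real.exp ((1/(4*B)) * ((s:ℝ)*A)) := by
    filter_upwards [hae] with ω h
    rw [abs_of_pos (Real.exp_pos _)]
    apply Real.exp_le_exp.mpr
    have h1 : |∑ j ∈ Finset.Icc 1 s, Z j ω| ≤ ∑ j ∈ Finset.Icc 1 s, |Z j ω| :=
      Finset.abs_sum_le_sum_abs _ _
    have h2 : ∑ j ∈ Finset.Icc 1 s, |Z j ω| ≤ (Finset.Icc 1 s).card • A :=
      Finset.sum_le_card_nsmul _ _ _ h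
    rw [Nat.card_Icc] at h2
    simp only [Nat.add_sub_cancel, nsmul_eq_mul] at h2
    have h3 := neg_abs_le (∑ j ∈ Finset.Icc 1 s, Z j ω)
    have hl : (0:ℝ) ≤ 1/(4*B) := by positivity
    nlinarith
  have hfint : Integrable f μ := integrable_of_ae_bound hfm.aestronglyMeasurable hfbd
  have hfnn : 0 ≤ᵐ[μ] f := Filter.Eventually.of_forall fun ω => (Real.exp_pos _).le
  have markov := mul_meas_ge_le_integral_of_nonneg hfnn hfint (Real.exp ((1/(4*B))*q))
  have hsub : {ω | (∑ j ∈ Finset.Icc 1 s, Z j ω) < -q}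
      ⊆ {ω | Real.exp ((1/(4*B))*q) ≤ f ω} := by
    intro ω h
    simp only [Set.mem_setOf_eq] at h ⊢
    rw [hf_def]
    apply Real.exp_le_exp.mpr
    have hl : (0:ℝ) < 1/(4*B) := by positivity
    nlinarith [mul_lt_mul_of_pos_left h hl]
  have hmono : μ {ω | (∑ j ∈ Finset.Icc 1 s, Z j ω) < -q}
      ≤ μ {ω | Real.exp ((1/(4*B))*q) ≤ f ω} := measure_mono hsub
  have htR : (μ {ω | Real.exp ((1/(4*B))*q) ≤ f ω}).toReal
      ≤ Real.exp ((s:ℝ)*((1/(4*B))*C/B + (1/(4*B))^2*C) - (1/(4*B))*q) := by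
    rw [Real.exp_sub, le_div_iff₀ (Real.exp_pos _)]
    calc (μ {ω | Real.exp ((1/(4*B))*q) ≤ f ω}).toReal * Real.exp ((1/(4*B))*q)
        = Real.exp ((1/(4*B))*q) * (μ {ω | Real.exp ((1/(4*B))*q) ≤ f ω}).toReal :=
          mul_comm _ _
      _ ≤ ∫ ω, f ω ∂μ := markov
      _ ≤ Real.exp ((s:ℝ)*((1/(4*B))*C/B + (1/(4*B))^2*C)) := hint
  have hsC : (s:ℝ)*C ≤ q*B/2 := by
    have := (div_le_iff₀ hB).mp hq1
    linarith
  have hnum : (s:ℝ)*((1/(4*B))*C/B + (1/(4*B))^2*C) - (1/(4*B))*q ≤ -q/(16*B) := by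
    have e1 : (s:ℝ)*((1/(4*B))*C/B + (1/(4*B))^2*C) - (1/(4*B))*q
        = (((s:ℝ)*C)*5 - 4*B*q) / (16*B^2) := by field_simp; ring
    have e2 : -q/(16*B) = (-(q*B)) / (16*B^2) := by
      rw [div_eq_div_iff (by positivity) (by positivity)]; ring
    rw [e1, e2]
    gcongr
    nlinarith [mul_nonneg hq0 hB.le]
  calc μ {ω | (∑ j ∈ Finset.Icc 1 s, Z j ω) < -q}
      = ENNReal.ofReal ((μ {ω | (∑ j ∈ Finset.Icc 1 s, Z j ω) < -q}).toReal) :=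
        (ENNReal.ofReal_toReal (measure_ne_top _ _)).symm
    _ ≤ ENNReal.ofReal (3 * Real.exp (-q/(16*B))) := by
        apply ENNReal.ofReal_le_ofReal
        have t1 : (μ {ω | (∑ j ∈ Finset.Icc 1 s, Z j ω) < -q}).toReal
            ≤ (μ {ω | Real.exp ((1/(4*B))*q) ≤ f ω}).toReal :=
          ENNReal.toReal_mono (measure_ne_top _ _) hmono
        have t2 := le_trans t1 htR
        have t3 : Real.exp ((s:ℝ)*((1/(4*B))*C/B + (1/(4*B))^2*C) - (1/(4*B))*q)
            ≤ Real.exp (-q/(16*B)) := Real.exp_le_exp.mpr hnum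
        nlinarith [Real.exp_pos (-q/(16*B))]
end
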